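/- Let K be an algebraically closed field, Λ a finite-dimensional K-algebra, and M a projective Λ-module. Then ^⊥(M^⊥) = Gen(M): a Λ-module X satisfies Hom_Λ(X,Y) = 0 for all Y with Hom_Λ(M,Y) = 0 if and only if X is a quotient of a direct sum of copies of M. -/

import Mathlib

universe u

/-- For a projective module `M` over a finite-dimensional algebra, `^⊥(M^⊥) = Gen M`:
a module `X` has no nonzero maps to modules in `M^⊥` if and only if `X` is a quotient of
a direct sum of copies of `M`. -/
theorem perp_perp_eq_gen_of_projective
    (K : Type u) [Field K] [IsAlgClosed K]
    (Λ : Type u) [Ring Λ] [Algebra K Λ] [FiniteDimensional K Λ]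
    (M : Type u) [AddCommGroup M] [Module Λ M] (hM : Module.Projective Λ M)
    (X : Type u) [AddCommGroup X] [Module Λ X] :
    (∀ (Y : Type u) [AddCommGroup Y] [Module Λ Y],
        (∀ g : M →ₗ[Λ] Y, g = 0) → ∀ f : X →ₗ[Λ] Y, f = 0) ↔
      ∃ (ι : Type u) (p : (ι →₀ M) →ₗ[Λ] X), Function.Surjective p := by
  haveI := hM
  constructor
  · intro h
    set T : Submodule Λ X := ⨆ f : M →ₗ[Λ] X, LinearMap.range f with hT
    have hhom : ∀ g : M →ₗ[Λ] X ⧸ T, g = 0 := by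
      intro g
      obtain ⟨l, hl⟩ := Module.projective_lifting_property T.mkQ g
        (Submodule.mkQ_surjective T)
      have hrange : LinearMap.range l ≤ T := le_iSup (fun f : M →ₗ[Λ] X => LinearMap.range f) l
      ext m
      have : l m ∈ T := hrange ⟨m, rfl⟩
      have := (Submodule.Quotient.mk_eq_zero T).2 this
      rw [← hl]
      simpa using this
    have hmkQ : T.mkQ = 0 := h (X ⧸ T) hhom T.mkQ
    have hTtop : T = ⊤ := by
      rw [eq_top_iff]
      intro x _
      have : T.mkQ x = 0 := by rw [hmkQ]; rfl
      exact (Submodule.Quotient.mk_eq_zero T).1 this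
    refine ⟨M →ₗ[Λ] X, Finsupp.lsum ℕ (fun f : M →ₗ[Λ] X => f), ?_⟩
    have hr : T ≤ LinearMap.range (Finsupp.lsum ℕ (fun f : M →ₗ[Λ] X => f)) := by
      refine iSup_le fun f => ?_
      rintro _ ⟨m, rfl⟩
      exact ⟨Finsupp.single f m, by simp⟩
    intro x
    exact hr (hTtop ▸ Submodule.mem_top)
  · rintro ⟨ι, p, hp⟩ Y _ _ hY f
    have key : ∀ z : ι →₀ M, f (p z) = 0 := by
      intro z
      induction z using Finsupp.induction with
      | zero => simp
      | single_add i m rest _ _ ih =>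
        have h1 : f.comp (p.comp (Finsupp.lsingle i)) = 0 := hY _
        have h2 : f (p (Finsupp.single i m)) = 0 := by
          have := congrArg (fun g : M →ₗ[Λ] Y => g m) h1
          simpa using this
        simp [map_add, h2, ih]
    ext x
    obtain ⟨z, rfl⟩ := hp x
    simpa using key z
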